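/- arXiv:2211.02802 — 3 statements merged into one kernel-verified Lean document; each statement's English description precedes it below -/
import Mathlib

section
/- Let X, Y span a subspace Γ of matrices of rank at most s, let ∇F satisfy the coercivity ⟨X − Y, ∇F(X) − ∇F(Y)⟩ ≥ 2(1 − δ_s)‖X − Y‖_F² and the projected smoothness ‖P_Γ(∇F(X) − ∇F(Y))‖_F² ≤ 2(1+δ_s)⟨X − Y, ∇F(X) − ∇F(Y)⟩. Then for any step size 0 < η ≤ 1/(1+δ_s): ‖X − Y − η P_Γ(∇F(X) − ∇F(Y))‖_F ≤ √(1 − 2(1 − δ_s)(2η − 2η²(1+δ_s))) · ‖X − Y‖_F. -/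
noncomputable section

open Finset

/-- Frobenius inner product on real matrices. -/
def finner {n₁ n₂ : ℕ} (X Y : Matrix (Fin n₁) (Fin n₂) ℝ) : ℝ :=
  ∑ i, ∑ j, X i j * Y i j

/-- Frobenius norm on real matrices. -/
def fnorm {n₁ n₂ : ℕ} (X : Matrix (Fin n₁) (Fin n₂) ℝ) : ℝ :=
  Real.sqrt (finner X X)

lemma finner_self_nonneg {n₁ n₂ : ℕ} (X : Matrix (Fin n₁) (Fin n₂) ℝ) :
    0 ≤ finner X X := by
  apply Finset.sum_nonneg; intro i _
  apply Finset.sum_nonneg; intro j _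
  exact mul_self_nonneg _

lemma fnorm_sq {n₁ n₂ : ℕ} (X : Matrix (Fin n₁) (Fin n₂) ℝ) :
    fnorm X ^ 2 = finner X X := Real.sq_sqrt (finner_self_nonneg X)

lemma finner_expand {n₁ n₂ : ℕ} (η : ℝ) (A B : Matrix (Fin n₁) (Fin n₂) ℝ) :
    finner (A - η • B) (A - η • B) =
      finner A A - 2 * η * finner A B + η ^ 2 * finner B B := by
  simp only [finner, Matrix.sub_apply, Matrix.smul_apply, smul_eq_mul,
    Finset.mul_sum, ← Finset.sum_add_distrib, ← Finset.sum_sub_distrib]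
  refine Finset.sum_congr rfl fun i _ => Finset.sum_congr rfl fun j _ => ?_
  ring

theorem stmt_4 {n₁ n₂ s : ℕ} (δ η : ℝ) (hδ0 : 0 ≤ δ) (hδ1 : δ < 1)
    (hη0 : 0 < η) (hη1 : η ≤ 1 / (1 + δ))
    (Γ : Submodule ℝ (Matrix (Fin n₁) (Fin n₂) ℝ))
    (hrank : ∀ Z ∈ Γ, Matrix.rank Z ≤ s)
    (X Y : Matrix (Fin n₁) (Fin n₂) ℝ) (hX : X ∈ Γ) (hY : Y ∈ Γ)
    (P : Matrix (Fin n₁) (Fin n₂) ℝ →ₗ[ℝ] Matrix (Fin n₁) (Fin n₂) ℝ)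
    (hPmem : ∀ Z, P Z ∈ Γ) (hPid : ∀ Z ∈ Γ, P Z = Z)
    (hPsa : ∀ Z W, finner (P Z) W = finner Z (P W))
    (G : Matrix (Fin n₁) (Fin n₂) ℝ → Matrix (Fin n₁) (Fin n₂) ℝ)
    (hcoerc : finner (X - Y) (G X - G Y) ≥ 2 * (1 - δ) * fnorm (X - Y) ^ 2)
    (hsmooth : fnorm (P (G X - G Y)) ^ 2 ≤ 2 * (1 + δ) * finner (X - Y) (G X - G Y)) :
    fnorm (X - Y - η • P (G X - G Y)) ≤
      Real.sqrt (1 - 2 * (1 - δ) * (2 * η - 2 * η ^ 2 * (1 + δ))) * fnorm (X - Y) := by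
  set D := X - Y with hD
  set W := G X - G Y with hW
  have hDmem : D ∈ Γ := Submodule.sub_mem Γ hX hY
  have hPD : P D = D := hPid D hDmem
  -- inner product of D with projected gradient equals with gradient
  have hkey : finner D (P W) = finner D W := by
    rw [← hPsa D W, hPD]
  have hδpos : (0:ℝ) < 1 + δ := by linarith
  have hηδ : 0 ≤ 2 * η - 2 * η ^ 2 * (1 + δ) := by
    have : η * (1 + δ) ≤ 1 := by
      rw [le_div_iff₀ hδpos] at hη1; linarith
    nlinarith
  have hc : finner D W ≥ 2 * (1 - δ) * finner D D := by
    rw [← fnorm_sq]; exact hcoerc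
  have hg : finner (P W) (P W) ≤ 2 * (1 + δ) * finner D W := by
    rw [← fnorm_sq]; exact hsmooth
  have hDD : 0 ≤ finner D D := finner_self_nonneg D
  have hsq : finner (D - η • P W) (D - η • P W) ≤
      (1 - 2 * (1 - δ) * (2 * η - 2 * η ^ 2 * (1 + δ))) * finner D D := by
    rw [finner_expand, hkey]
    nlinarith [sq_nonneg η, mul_le_mul_of_nonneg_left hg (sq_nonneg η),
      mul_le_mul_of_nonneg_left hc hηδ]
  have := Real.sqrt_le_sqrt hsq
  calc fnorm (D - η • P W) = Real.sqrt (finner (D - η • P W) (D - η • P W)) := rfl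
    _ ≤ Real.sqrt ((1 - 2 * (1 - δ) * (2 * η - 2 * η ^ 2 * (1 + δ))) * finner D D) := this
    _ = Real.sqrt (1 - 2 * (1 - δ) * (2 * η - 2 * η ^ 2 * (1 + δ))) * Real.sqrt (finner D D) :=
        Real.sqrt_mul' _ hDD
    _ = _ := rfl
end
end

section
/- Let X* satisfy ∇F(X*) = 0 and let Λ be a subspace containing X and X* such that ⟨X − X*, ∇F(X) − ∇F(X*)⟩ ≥ 2(1 − δ_τ)‖X − X*‖_F² and ⟨∇F(X) − ∇F(X*), X − X*⟩ ≤ 2(1+δ_τ)‖X − X*‖_F², and F(X) ≤ F(X*) + (1+δ_τ)‖X − X*‖_F². Then ‖P_Λ(∇F(X))‖_F² ≥ (4(1 − δ_τ)²/(1+δ_τ)) (F(X) − F(X*)). -/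
noncomputable section

open Finset

lemma fnorm_nonneg {n₁ n₂ : ℕ} (X : Matrix (Fin n₁) (Fin n₂) ℝ) :
    0 ≤ fnorm X := Real.sqrt_nonneg _

lemma finner_cs {n₁ n₂ : ℕ} (A B : Matrix (Fin n₁) (Fin n₂) ℝ) :
    finner A B ≤ fnorm A * fnorm B := by
  have h : finner A B ^ 2 ≤ finner A A * finner B B := by
    have hA : finner A A = ∑ p : Fin n₁ × Fin n₂, (A p.1 p.2) ^ 2 := by
      simp [finner, Fintype.sum_prod_type, sq]
    have hB : finner B B = ∑ p : Fin n₁ × Fin n₂, (B p.1 p.2) ^ 2 := by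
      simp [finner, Fintype.sum_prod_type, sq]
    have hAB : finner A B = ∑ p : Fin n₁ × Fin n₂, A p.1 p.2 * B p.1 p.2 := by
      simp [finner, Fintype.sum_prod_type]
    rw [hA, hB, hAB]
    exact Finset.sum_mul_sq_le_sq_mul_sq _ _ _
  have h2 : fnorm A * fnorm B = Real.sqrt (finner A A * finner B B) := by
    rw [fnorm, fnorm, Real.sqrt_mul (finner_self_nonneg A)]
  rw [h2]
  calc finner A B ≤ |finner A B| := le_abs_self _
    _ = Real.sqrt (finner A B ^ 2) := by rw [Real.sqrt_sq_eq_abs]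
    _ ≤ Real.sqrt (finner A A * finner B B) := Real.sqrt_le_sqrt h

theorem stmt_7 {n₁ n₂ τ : ℕ} (δ : ℝ) (hδ0 : 0 ≤ δ) (hδ1 : δ < 1)
    (Λ : Submodule ℝ (Matrix (Fin n₁) (Fin n₂) ℝ))
    (hrank : ∀ Z ∈ Λ, Matrix.rank Z ≤ τ)
    (X Xstar : Matrix (Fin n₁) (Fin n₂) ℝ) (hX : X ∈ Λ) (hXstar : Xstar ∈ Λ)
    (P : Matrix (Fin n₁) (Fin n₂) ℝ →ₗ[ℝ] Matrix (Fin n₁) (Fin n₂) ℝ)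
    (hPmem : ∀ Z, P Z ∈ Λ) (hPid : ∀ Z ∈ Λ, P Z = Z)
    (hPsa : ∀ Z W, finner (P Z) W = finner Z (P W))
    (F : Matrix (Fin n₁) (Fin n₂) ℝ → ℝ)
    (G : Matrix (Fin n₁) (Fin n₂) ℝ → Matrix (Fin n₁) (Fin n₂) ℝ)
    (hcrit : G Xstar = 0)
    (hcoerc : finner (X - Xstar) (G X - G Xstar) ≥
      2 * (1 - δ) * fnorm (X - Xstar) ^ 2)
    (hsmooth : finner (G X - G Xstar) (X - Xstar) ≤
      2 * (1 + δ) * fnorm (X - Xstar) ^ 2)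
    (hupper : F X ≤ F Xstar + (1 + δ) * fnorm (X - Xstar) ^ 2) :
    fnorm (P (G X)) ^ 2 ≥ (4 * (1 - δ) ^ 2 / (1 + δ)) * (F X - F Xstar) := by
  set d := fnorm (X - Xstar) with hd
  set p := fnorm (P (G X)) with hp
  have hdmem : X - Xstar ∈ Λ := Λ.sub_mem hX hXstar
  have key : finner (X - Xstar) (G X) = finner (X - Xstar) (P (G X)) := by
    conv_lhs => rw [← hPid _ hdmem]
    exact hPsa _ _
  have h1 : 2 * (1 - δ) * d ^ 2 ≤ finner (X - Xstar) (P (G X)) := by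
    rw [← key]
    have := hcoerc
    rwa [hcrit, sub_zero] at this
  have h2 : finner (X - Xstar) (P (G X)) ≤ d * p := finner_cs _ _
  have hdn : 0 ≤ d := fnorm_nonneg _
  have hpn : 0 ≤ p := fnorm_nonneg _
  have hsq : p ^ 2 ≥ 4 * (1 - δ) ^ 2 * d ^ 2 := by
    rcases eq_or_lt_of_le hdn with h0 | h0
    · simp [← h0]; positivity
    · have h3 : 2 * (1 - δ) * d ≤ p := by
        have := h1.trans h2
        nlinarith
      nlinarith
  have hδp : (0:ℝ) < 1 + δ := by linarith
  have hF : F X - F Xstar ≤ (1 + δ) * d ^ 2 := by linarith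
  have hc : 0 ≤ 4 * (1 - δ) ^ 2 / (1 + δ) := by positivity
  calc (4 * (1 - δ) ^ 2 / (1 + δ)) * (F X - F Xstar)
      ≤ (4 * (1 - δ) ^ 2 / (1 + δ)) * ((1 + δ) * d ^ 2) := by
        exact mul_le_mul_of_nonneg_left hF hc
    _ = 4 * (1 - δ) ^ 2 * d ^ 2 := by field_simp
    _ ≤ p ^ 2 := hsq
end
end

section
/- Let 0 ≤ δ < 1/71 and η satisfy (6 − 6δ − √(71δ² − 72δ + 1))/(12 − 12δ²) < η < (6 − 6δ + √(71δ² − 72δ + 1))/(12 − 12δ²). Set ρ = 2√(1 − 2(1 − δ)(2η − 2η²(1+δ))). Then ρ < 1 and for every integer n ≥ 1, κ = (−3ρ^{n+1} + ρⁿ + 2ρ)/(1 − ρ) < 1. -/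
theorem stmt_12 (δ η : ℝ) (hδ0 : 0 ≤ δ) (hδ1 : δ < 1 / 71)
    (hηl : (6 - 6 * δ - Real.sqrt (71 * δ ^ 2 - 72 * δ + 1)) / (12 - 12 * δ ^ 2) < η)
    (hηu : η < (6 - 6 * δ + Real.sqrt (71 * δ ^ 2 - 72 * δ + 1)) / (12 - 12 * δ ^ 2))
    (ρ : ℝ) (hρ : ρ = 2 * Real.sqrt (1 - 2 * (1 - δ) * (2 * η - 2 * η ^ 2 * (1 + δ))))
    (n : ℕ) (hn : 1 ≤ n) :
    ρ < 1 ∧ (-3 * ρ ^ (n + 1) + ρ ^ n + 2 * ρ) / (1 - ρ) < 1 := by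
  have hd : (0:ℝ) < 12 - 12 * δ ^ 2 := by nlinarith
  set s := Real.sqrt (71 * δ ^ 2 - 72 * δ + 1) with hs
  have hS : (0:ℝ) ≤ 71 * δ ^ 2 - 72 * δ + 1 := by nlinarith
  have hs2 : s ^ 2 = 71 * δ ^ 2 - 72 * δ + 1 := Real.sq_sqrt hS
  have h1 : 6 - 6 * δ - s < η * (12 - 12 * δ ^ 2) := by
    rw [div_lt_iff₀ hd] at hηl; linarith
  have h2 : η * (12 - 12 * δ ^ 2) < 6 - 6 * δ + s := by
    rw [lt_div_iff₀ hd] at hηu; linarith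
  have hx : 1 - 2 * (1 - δ) * (2 * η - 2 * η ^ 2 * (1 + δ)) < 1 / 36 := by
    nlinarith [mul_pos (by linarith : (0:ℝ) < η * (12 - 12 * δ ^ 2) - (6 - 6 * δ - s))
      (by linarith : (0:ℝ) < 6 - 6 * δ + s - η * (12 - 12 * δ ^ 2)), hd]
  have hρ3 : ρ < 1 / 3 := by
    rw [hρ]
    have : Real.sqrt (1 - 2 * (1 - δ) * (2 * η - 2 * η ^ 2 * (1 + δ))) < 1 / 6 := by
      rw [Real.sqrt_lt' (by norm_num : (0:ℝ) < 1 / 6)]; nlinarith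
    linarith
  have hρ0 : 0 ≤ ρ := by rw [hρ]; positivity
  have hρ1 : ρ < 1 := by linarith
  refine ⟨hρ1, ?_⟩
  rw [div_lt_one (by linarith)]
  have hpn : ρ ^ n ≤ ρ := by
    calc ρ ^ n ≤ ρ ^ 1 := pow_le_pow_of_le_one hρ0 (by linarith) hn
    _ = ρ := pow_one ρ
  have hpn0 : 0 ≤ ρ ^ n := pow_nonneg hρ0 n
  have hsucc : ρ ^ (n + 1) = ρ ^ n * ρ := pow_succ ρ n
  rw [hsucc]
  nlinarith [mul_nonneg (by linarith : (0:ℝ) ≤ 1 - 3 * ρ) (by linarith : (0:ℝ) ≤ ρ - ρ ^ n),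
    mul_pos (by linarith : (0:ℝ) < 1 - 3 * ρ) (by linarith : (0:ℝ) < 1 - ρ)]
end
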